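/- Let Y be a finite set, let β > 0, let π_ref : Y → ℝ satisfy 0 < π_ref(y) for all y, and let (y₁ʷ, y₁ˡ), …, (yₙʷ, yₙˡ) be preference pairs such that the 2n responses y₁ʷ, y₁ˡ, …, yₙʷ, yₙˡ are pairwise distinct elements of Y. For a probability mass function π on Y that is positive on all 2n responses, define the DPO loss L(π) = ∑_{i=1}^n −log σ(β log(π(yᵢʷ)/π(yᵢˡ)) − β log(π_ref(yᵢʷ)/π_ref(yᵢˡ))), where σ is the logistic sigmoid. Then (i) L(π) > 0 for every such π, (ii) the infimum of L over all such π equals 0 and is not attained, and (iii) for every sequence (π_k) of such probability mass functions with L(π_k) → 0, the ratio π_k(yᵢʷ)/π_k(yᵢˡ) tends to +∞ for every i ∈ {1,…,n}. -/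

import Mathlib

open Filter

/-- The logistic sigmoid function σ(x) = 1/(1+e^{−x}). -/
noncomputable def logisticSigmoid (x : ℝ) : ℝ := 1 / (1 + Real.exp (-x))

/-- The DPO loss over n mutually disjoint preference pairs with winners `yw`
and losers `yl`, reference policy `πref` and inverse temperature `β`. -/
noncomputable def dpoLoss {Y : Type*} [Fintype Y] {n : ℕ} (β : ℝ) (πref : Y → ℝ)
    (yw yl : Fin n → Y) (π : Y → ℝ) : ℝ :=
  ∑ i, -Real.log (logisticSigmoid
    (β * Real.log (π (yw i) / π (yl i)) - β * Real.log (πref (yw i) / πref (yl i))))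

/-- `π` is a probability mass function on `Y` which is positive on all the
responses appearing in the preference data. -/
def IsValidPolicy {Y : Type*} [Fintype Y] {n : ℕ} (yw yl : Fin n → Y) (π : Y → ℝ) : Prop :=
  (∀ y, 0 ≤ π y) ∧ (∑ y, π y = 1) ∧ (∀ i, 0 < π (yw i)) ∧ (∀ i, 0 < π (yl i))

lemma neg_log_sigmoid (x : ℝ) :
    -Real.log (logisticSigmoid x) = Real.log (1 + Real.exp (-x)) := by
  rw [logisticSigmoid, one_div, Real.log_inv, neg_neg]

lemma one_add_exp_pos (x : ℝ) : (0:ℝ) < 1 + Real.exp (-x) := by positivity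

lemma neg_log_sigmoid_pos (x : ℝ) : 0 < -Real.log (logisticSigmoid x) := by
  rw [neg_log_sigmoid]
  apply Real.log_pos
  have := Real.exp_pos (-x); linarith

lemma tendsto_neg_log_sigmoid_atTop :
    Tendsto (fun x : ℝ => -Real.log (logisticSigmoid x)) atTop (nhds 0) := by
  simp only [neg_log_sigmoid]
  have h1 : Tendsto (fun x : ℝ => Real.exp (-x)) atTop (nhds 0) :=
    Real.tendsto_exp_atBot.comp tendsto_neg_atTop_atBot
  have h2 : Tendsto (fun x : ℝ => 1 + Real.exp (-x)) atTop (nhds 1) := by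
    simpa using tendsto_const_nhds.add h1
  have h3 := (Real.continuousAt_log (by norm_num : (1:ℝ) ≠ 0)).tendsto.comp h2
  simpa [Function.comp_def] using h3

lemma tendsto_of_neg_log_sigmoid {a : ℕ → ℝ}
    (h : Tendsto (fun k => -Real.log (logisticSigmoid (a k))) atTop (nhds 0)) :
    Tendsto a atTop atTop := by
  simp only [neg_log_sigmoid] at h
  have h1 : Tendsto (fun k => 1 + Real.exp (-(a k))) atTop (nhds 1) := by
    have h2 := (Real.continuous_exp.tendsto 0).comp h
    simp only [Function.comp_def, Real.exp_zero] at h2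
    refine h2.congr fun k => ?_
    rw [Real.exp_log (one_add_exp_pos _)]
  have h3 : Tendsto (fun k => Real.exp (-(a k))) atTop (nhds 0) := by
    have := h1.sub (tendsto_const_nhds (x := (1:ℝ)))
    simpa using this
  have h4 : Tendsto (fun k => -(a k)) atTop atBot :=
    Real.tendsto_exp_comp_nhds_zero.mp h3
  exact tendsto_neg_atBot_iff.mp h4

theorem dpo_inf_ratio {Y : Type*} [Fintype Y] (n : ℕ) (hn : 1 ≤ n)
    (β : ℝ) (hβ : 0 < β) (πref : Y → ℝ) (hπref : ∀ y, 0 < πref y)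
    (yw yl : Fin n → Y) (hdisj : Function.Injective (Sum.elim yw yl)) :
    (∀ π : Y → ℝ, IsValidPolicy yw yl π → 0 < dpoLoss β πref yw yl π) ∧
    IsGLB {l : ℝ | ∃ π : Y → ℝ, IsValidPolicy yw yl π ∧ dpoLoss β πref yw yl π = l} 0 ∧
    (∀ π : Y → ℝ, IsValidPolicy yw yl π → dpoLoss β πref yw yl π ≠ 0) ∧
    (∀ πk : ℕ → Y → ℝ, (∀ k, IsValidPolicy yw yl (πk k)) →
      Tendsto (fun k => dpoLoss β πref yw yl (πk k)) atTop (nhds 0) →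
      ∀ i, Tendsto (fun k => πk k (yw i) / πk k (yl i)) atTop atTop) := by
  classical
  have hn0 : (0:ℝ) < n := by exact_mod_cast hn
  -- injectivity consequences
  have hww : Function.Injective yw := fun a b hab => by
    have := hdisj (a₁ := Sum.inl a) (a₂ := Sum.inl b) (by simpa using hab)
    simpa using this
  have hll : Function.Injective yl := fun a b hab => by
    have := hdisj (a₁ := Sum.inr a) (a₂ := Sum.inr b) (by simpa using hab)
    simpa using this
  have hwl : ∀ i j, yw i ≠ yl j := fun i j hij => by
    have := hdisj (a₁ := Sum.inl i) (a₂ := Sum.inr j) (by simpa using hij)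
    simp at this
  -- positivity of the loss
  have hpos : ∀ π : Y → ℝ, 0 < dpoLoss β πref yw yl π := by
    intro π
    have hne : (Finset.univ : Finset (Fin n)).Nonempty := by
      have : Nonempty (Fin n) := ⟨⟨0, hn⟩⟩
      exact Finset.univ_nonempty
    exact Finset.sum_pos (fun i _ => neg_log_sigmoid_pos _) hne
  -- the explicit sequence of policies
  set W : Finset Y := Finset.image yw Finset.univ with hW
  set L : Finset Y := Finset.image yl Finset.univ with hL
  have hWL : Disjoint W L := by
    rw [Finset.disjoint_left]
    intro y hyW hyL
    obtain ⟨i, _, hi⟩ := Finset.mem_image.mp hyW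
    obtain ⟨j, _, hj⟩ := Finset.mem_image.mp hyL
    exact hwl i j (hi.trans hj.symm)
  have hcardW : W.card = n := by
    rw [hW, Finset.card_image_of_injective _ hww, Finset.card_univ, Fintype.card_fin]
  have hcardL : L.card = n := by
    rw [hL, Finset.card_image_of_injective _ hll, Finset.card_univ, Fintype.card_fin]
  set s : ℕ → ℝ := fun k => 1 / (2 * n * (k + 1)) with hs
  set w : ℕ → ℝ := fun k => (1 - n * s k) / n with hw
  have hspos : ∀ k, 0 < s k := by
    intro k; rw [hs]; positivity
  have hns : ∀ k, (n:ℝ) * s k = 1 / (2 * (k + 1)) := by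
    intro k
    rw [hs]
    field_simp
  have hnslt : ∀ k, (n:ℝ) * s k < 1 := by
    intro k
    rw [hns]
    rw [div_lt_one (by positivity)]
    have : (0:ℝ) ≤ (k:ℝ) := Nat.cast_nonneg k
    linarith
  have hwpos : ∀ k, 0 < w k := by
    intro k; rw [hw]
    apply div_pos _ hn0
    linarith [hnslt k]
  set π0 : ℕ → Y → ℝ := fun k y => if y ∈ W then w k else if y ∈ L then s k else 0 with hπ0
  have hπ0w : ∀ k i, π0 k (yw i) = w k := by
    intro k i
    rw [hπ0]
    simp only [if_pos (show yw i ∈ W from Finset.mem_image_of_mem yw (Finset.mem_univ i))]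
  have hπ0l : ∀ k i, π0 k (yl i) = s k := by
    intro k i
    have h1 : yl i ∉ W := by
      intro h
      obtain ⟨j, _, hj⟩ := Finset.mem_image.mp h
      exact hwl j i hj
    rw [hπ0]
    simp only [if_neg h1, if_pos (show yl i ∈ L from Finset.mem_image_of_mem yl (Finset.mem_univ i))]
  have hvalid : ∀ k, IsValidPolicy yw yl (π0 k) := by
    intro k
    refine ⟨?_, ?_, fun i => by rw [hπ0w]; exact hwpos k, fun i => by rw [hπ0l]; exact hspos k⟩
    · intro y
      rw [hπ0]
      dsimp only
      split_ifs
      · exact (hwpos k).le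
      · exact (hspos k).le
      · exact le_refl 0
    · have hsub : W ∪ L ⊆ Finset.univ := Finset.subset_univ _
      have hzero : ∀ y ∈ Finset.univ, y ∉ W ∪ L → π0 k y = 0 := by
        intro y _ hy
        rw [Finset.mem_union, not_or] at hy
        rw [hπ0]
        simp [hy.1, hy.2]
      rw [← Finset.sum_subset hsub hzero, Finset.sum_union hWL]
      have h1 : ∑ y ∈ W, π0 k y = n * w k := by
        rw [Finset.sum_congr rfl (fun y hy => ?_), Finset.sum_const, hcardW, nsmul_eq_mul]
        rw [hπ0]; simp [hy]
      have h2 : ∑ y ∈ L, π0 k y = n * s k := by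
        rw [Finset.sum_congr rfl (fun y hy => ?_), Finset.sum_const, hcardL, nsmul_eq_mul]
        simp only [hπ0]
        rw [if_neg (Finset.disjoint_right.mp hWL hy), if_pos hy]
      rw [h1, h2, hw]
      field_simp
      ring
  have hratio : ∀ k, w k / s k = 2 * k + 1 := by
    intro k
    have hn' : (n:ℝ) ≠ 0 := hn0.ne'
    simp only [hw, hs]
    field_simp
    ring
  -- loss of π0 tends to 0
  have hlosstendsto : Tendsto (fun k => dpoLoss β πref yw yl (π0 k)) atTop (nhds 0) := by
    have : ∀ k, dpoLoss β πref yw yl (π0 k) =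
        ∑ i, -Real.log (logisticSigmoid
          (β * Real.log (2 * k + 1) - β * Real.log (πref (yw i) / πref (yl i)))) := by
      intro k
      unfold dpoLoss
      refine Finset.sum_congr rfl fun i _ => ?_
      rw [hπ0w, hπ0l, hratio]
    rw [show (0:ℝ) = ∑ _i : Fin n, (0:ℝ) by simp]
    refine Tendsto.congr (fun k => (this k).symm) (tendsto_finset_sum _ fun i _ => ?_)
    have harg : Tendsto (fun k : ℕ => β * Real.log (2 * k + 1)
        - β * Real.log (πref (yw i) / πref (yl i))) atTop atTop := by
      apply tendsto_atTop_add_const_right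
      apply Tendsto.const_mul_atTop hβ
      apply Real.tendsto_log_atTop.comp
      apply tendsto_atTop_add_const_right
      exact (tendsto_natCast_atTop_atTop (R := ℝ)).const_mul_atTop (by norm_num)
    exact tendsto_neg_log_sigmoid_atTop.comp harg
  refine ⟨fun π _ => hpos π, ?_, fun π _ => (hpos π).ne', ?_⟩
  · constructor
    · rintro l ⟨π, hπ, rfl⟩
      exact (hpos π).le
    · intro b hb
      refine ge_of_tendsto hlosstendsto (Eventually.of_forall fun k => ?_)
      exact hb ⟨π0 k, hvalid k, rfl⟩
  · intro πk hπk hloss i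
    set a : ℕ → ℝ := fun k => β * Real.log (πk k (yw i) / πk k (yl i))
      - β * Real.log (πref (yw i) / πref (yl i)) with ha
    have hterm : Tendsto (fun k => -Real.log (logisticSigmoid (a k))) atTop (nhds 0) := by
      apply squeeze_zero (fun k => (neg_log_sigmoid_pos _).le) _ hloss
      intro k
      unfold dpoLoss
      rw [ha]
      exact Finset.single_le_sum
        (f := fun j => -Real.log (logisticSigmoid (β * Real.log (πk k (yw j) / πk k (yl j))
          - β * Real.log (πref (yw j) / πref (yl j)))))
        (fun j _ => (neg_log_sigmoid_pos _).le) (Finset.mem_univ i)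
    have h1 : Tendsto a atTop atTop := tendsto_of_neg_log_sigmoid hterm
    have h2 : Tendsto (fun k => β * Real.log (πk k (yw i) / πk k (yl i))) atTop atTop := by
      have := tendsto_atTop_add_const_right atTop
        (β * Real.log (πref (yw i) / πref (yl i))) h1
      refine this.congr fun k => ?_
      rw [ha]; ring
    have h3 : Tendsto (fun k => Real.log (πk k (yw i) / πk k (yl i))) atTop atTop := by
      have := h2.atTop_div_const hβ
      refine this.congr fun k => ?_
      rw [mul_comm, mul_div_assoc, div_self hβ.ne', mul_one]
    have h4 := Real.tendsto_exp_atTop.comp h3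
    refine h4.congr fun k => ?_
    have hr : 0 < πk k (yw i) / πk k (yl i) :=
      div_pos ((hπk k).2.2.1 i) ((hπk k).2.2.2 i)
    simp [Function.comp_def, Real.exp_log hr]
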